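/- Let f : X → ℝ be a filter on a Lefschetz complex with n = |BD(f)|. A bijection Φ : {1,…,n} → BD(f) is a shallow order of f if and only if Φ is a linear extension of the depth poset Depth(f); in particular, every linear extension of Depth(f) is a shallow order. -/

import Mathlib

attribute [local instance] Classical.propDecidable

/-- A Lefschetz complex over an ambient finite type `C` of potential cells:
a finite set `cells` of cells, a dimension function, and a mod-2 incidence
function `bd` supported on `cells`, with `bd x y ≠ 0` only if
`dim y = dim x + 1`, and `∂∘∂ = 0` mod 2. -/
structure LC (C : Type) [Fintype C] [DecidableEq C] : Type where
  cells : Finset C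
  dim : C → ℤ
  bd : C → C → ZMod 2
  bd_mem : ∀ x y, bd x y ≠ 0 → x ∈ cells ∧ y ∈ cells
  bd_dim : ∀ x y, bd x y ≠ 0 → dim y = dim x + 1
  bd_sq : ∀ x z, ∑ y, bd x y * bd y z = 0

variable {C : Type} [Fintype C] [DecidableEq C]

/-- A filter on a Lefschetz complex: injective on the cells, and increasing
along the facet relation. -/
def IsFilter (L : LC C) (f : C → ℝ) : Prop :=
  (∀ x ∈ L.cells, ∀ y ∈ L.cells, f x = f y → x = y) ∧
  ∀ x y, L.bd x y ≠ 0 → f x < f y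

lemma LC.bd_self (L : LC C) (a : C) : L.bd a a = 0 := by
  by_contra h
  have := L.bd_dim a a h
  omega

/-- The boundary map of the quotient after canceling `(s,t)`:
`∂'(x,y) = ∂(x,y) + ∂(s,y)·∂(x,t)` on the remaining cells, `0` elsewhere. -/
def cancelBd (L : LC C) (s t : C) : C → C → ZMod 2 := fun x y =>
  if x ∈ L.cells \ {s, t} ∧ y ∈ L.cells \ {s, t} then
    L.bd x y + L.bd s y * L.bd x t
  else 0

private lemma zmod2_add_self : ∀ a : ZMod 2, a + a = 0 := by decide

/-- The quotient Lefschetz complex after canceling the facet-cofacet pair `(s,t)`. -/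
noncomputable def cancel (L : LC C) (s t : C) : LC C :=
  if hst : L.bd s t = 1 then
    { cells := L.cells \ {s, t}
      dim := L.dim
      bd := cancelBd L s t
      bd_mem := by
        intro x y h
        unfold cancelBd at h
        split_ifs at h with hc
        · exact hc
        · exact absurd rfl h
      bd_dim := by
        intro x y h
        unfold cancelBd at h
        split_ifs at h with hc
        · by_cases hxy : L.bd x y = 0
          · rw [hxy, zero_add] at h
            have h1 : L.bd s y ≠ 0 := fun hz => by simp [hz] at h
            have h2 : L.bd x t ≠ 0 := fun hz => by simp [hz] at h
            have d1 := L.bd_dim s y h1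
            have d2 := L.bd_dim x t h2
            have d3 := L.bd_dim s t (by simp [hst])
            omega
          · exact L.bd_dim x y hxy
        · exact absurd rfl h
      bd_sq := by
        intro x z
        by_cases hx : x ∈ L.cells \ {s, t}
        swap
        · refine Finset.sum_eq_zero fun y _ => ?_
          unfold cancelBd
          rw [if_neg (fun hc => hx hc.1), zero_mul]
        by_cases hz : z ∈ L.cells \ {s, t}
        swap
        · refine Finset.sum_eq_zero fun y _ => ?_
          have h0 : cancelBd L s t y z = 0 := by
            unfold cancelBd; rw [if_neg (fun hc => hz hc.2)]
          rw [h0, mul_zero]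
        have key : ∀ y, cancelBd L s t x y * cancelBd L s t y z =
            (L.bd x y + L.bd s y * L.bd x t) * (L.bd y z + L.bd s z * L.bd y t) := by
          intro y
          by_cases hy : y ∈ L.cells \ {s, t}
          · unfold cancelBd
            rw [if_pos ⟨hx, hy⟩, if_pos ⟨hy, hz⟩]
          · have lhs0 : cancelBd L s t x y = 0 := by
              unfold cancelBd; rw [if_neg (fun hc => hy hc.2)]
            rw [lhs0, zero_mul]
            by_cases hyc : y ∈ L.cells
            · have hyst : y = s ∨ y = t := by
                simp only [Finset.mem_sdiff, Finset.mem_insert, Finset.mem_singleton] at hy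
                tauto
              rcases hyst with rfl | rfl
              · simp [L.bd_self, hst, zmod2_add_self]
              · simp [L.bd_self, hst, zmod2_add_self]
            · have b1 : L.bd x y = 0 := by
                by_contra hb; exact hyc (L.bd_mem x y hb).2
              have b2 : L.bd s y = 0 := by
                by_contra hb; exact hyc (L.bd_mem s y hb).2
              have b3 : L.bd y z = 0 := by
                by_contra hb; exact hyc (L.bd_mem y z hb).1
              have b4 : L.bd y t = 0 := by
                by_contra hb; exact hyc (L.bd_mem y t hb).1
              rw [b1, b2, b3, b4]
              ring
        rw [Finset.sum_congr rfl fun y _ => key y]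
        have expand : ∀ y : C,
            (L.bd x y + L.bd s y * L.bd x t) * (L.bd y z + L.bd s z * L.bd y t) =
            L.bd x y * L.bd y z + L.bd s z * (L.bd x y * L.bd y t)
              + L.bd x t * (L.bd s y * L.bd y z)
              + L.bd x t * L.bd s z * (L.bd s y * L.bd y t) := by
          intro y; ring
        rw [Finset.sum_congr rfl fun y _ => expand y]
        simp only [Finset.sum_add_distrib, ← Finset.mul_sum, L.bd_sq, mul_zero,
          add_zero, zero_add] }
  else L

/-- The boundary operator on mod-2 chains. -/
noncomputable def bdOp (L : LC C) : (C → ZMod 2) →ₗ[ZMod 2] (C → ZMod 2) where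
  toFun c := fun x => ∑ y, L.bd x y * c y
  map_add' a b := by
    funext x
    simp [mul_add, Finset.sum_add_distrib]
  map_smul' m a := by
    funext x
    simp only [Pi.smul_apply, smul_eq_mul, RingHom.id_apply]
    rw [Finset.mul_sum]
    exact Finset.sum_congr rfl fun y _ => by ring

/-- The `p`-chains of a Lefschetz complex: mod-2 chains supported on cells of
dimension `p`. -/
def chains (L : LC C) (p : ℤ) : Submodule (ZMod 2) (C → ZMod 2) where
  carrier := {c | ∀ x, c x ≠ 0 → x ∈ L.cells ∧ L.dim x = p}
  zero_mem' := by intro x hx; simp at hx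
  add_mem' := by
    intro a b ha hb x hx
    by_cases h1 : a x = 0
    · refine hb x fun h2 => hx ?_
      show a x + b x = 0
      rw [h1, h2, add_zero]
    · exact ha x h1
  smul_mem' := by
    intro m c hc x hx
    refine hc x fun h0 => hx ?_
    show m * c x = 0
    rw [h0, mul_zero]

/-- The `p`-cycles. -/
noncomputable def cycles (L : LC C) (p : ℤ) : Submodule (ZMod 2) (C → ZMod 2) :=
  chains L p ⊓ LinearMap.ker (bdOp L)

/-- The `p`-boundaries. -/
noncomputable def boundaries (L : LC C) (p : ℤ) : Submodule (ZMod 2) (C → ZMod 2) :=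
  Submodule.map (bdOp L) (chains L (p + 1))

/-- The mod-2 homology of a Lefschetz complex in dimension `p`. -/
noncomputable def homology (L : LC C) (p : ℤ) : Type :=
  cycles L p ⧸ (Submodule.comap (cycles L p).subtype (boundaries L p))

noncomputable instance (L : LC C) (p : ℤ) : AddCommGroup (homology L p) :=
  inferInstanceAs (AddCommGroup (cycles L p ⧸
    Submodule.comap (cycles L p).subtype (boundaries L p)))

noncomputable instance (L : LC C) (p : ℤ) : Module (ZMod 2) (homology L p) :=
  inferInstanceAs (Module (ZMod 2) (cycles L p ⧸
    Submodule.comap (cycles L p).subtype (boundaries L p)))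

/-- The boundary of the cell `y`, as a chain. -/
def col (L : LC C) (y : C) : C → ZMod 2 := fun x => L.bd x y

/-- The chain `v` is the boundary of a chain supported on cells with filter
value `< b`. -/
def IsBdryBelow (L : LC C) (f : C → ℝ) (b : ℝ) (v : C → ZMod 2) : Prop :=
  ∃ c : C → ZMod 2, (∀ z, c z ≠ 0 → z ∈ L.cells ∧ f z < b) ∧ bdOp L c = v

/-- The cell `y` gives death: `[∂y] ≠ 0` in the homology of the sublevel set
strictly below `f y`. -/
def givesDeath (L : LC C) (f : C → ℝ) (y : C) : Prop :=
  y ∈ L.cells ∧ ¬ IsBdryBelow L f (f y) (col L y)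

/-- The cell `y` gives birth: `[∂y] = 0` in the homology of the sublevel set
strictly below `f y`. -/
def givesBirth (L : LC C) (f : C → ℝ) (y : C) : Prop :=
  y ∈ L.cells ∧ IsBdryBelow L f (f y) (col L y)

/-- The unique chain supported on death-giving cells below `y` whose boundary
is `∂y` (for birth-giving `y`); junk value otherwise. -/
noncomputable def canChain (L : LC C) (f : C → ℝ) (y : C) : C → ZMod 2 :=
  if h : ∃ c : C → ZMod 2,
      (∀ z, c z ≠ 0 → f z < f y ∧ givesDeath L f z) ∧ bdOp L c = col L y
  then h.choose else 0

/-- The canonical cycle `d_y = y + c_y` of a birth-giving cell `y`. -/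
noncomputable def canCycle (L : LC C) (f : C → ℝ) (y : C) : C → ZMod 2 :=
  Pi.single y 1 + canChain L f y

/-- `v` and `w` are homologous in the sublevel complex strictly below `b`. -/
def HomBelow (L : LC C) (f : C → ℝ) (b : ℝ) (v w : C → ZMod 2) : Prop :=
  ∃ c : C → ZMod 2, (∀ z, c z ≠ 0 → z ∈ L.cells ∧ f z < b) ∧ bdOp L c = v + w

/-- Sorting a finset of cells by increasing filter value (fueled recursion). -/
noncomputable def sortAux (f : C → ℝ) : ℕ → Finset C → List C
  | 0, _ => []
  | n + 1, S =>
    if h : S.Nonempty then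
      let m := (Finset.exists_min_image S f h).choose
      m :: sortAux f n (S.erase m)
    else []

/-- The cells of `L` listed in increasing order of filter value. -/
noncomputable def sortedCells (L : LC C) (f : C → ℝ) : List C :=
  sortAux f L.cells.card L.cells

/-- An element of `S` maximizing `f`, with default value. -/
noncomputable def maxCellD (f : C → ℝ) (S : Finset C) (dflt : C) : C :=
  if h : S.Nonempty then (Finset.exists_max_image S f h).choose else dflt

/-- One step of the persistence pairing algorithm: the state is the pair
(unpaired birth-giving cells, birth-death pairs found so far), and `y` is the
next cell in the filter order.  If `y` gives birth it is added to the unpaired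
set; if `y` gives death, the unique subset `A` of the unpaired cells whose
canonical cycles sum to a cycle homologous to `∂y` below `y` is found, and `y`
is paired with the cell of `A` of maximal filter value. -/
noncomputable def pairStep (L : LC C) (f : C → ℝ) (st : Finset C × Finset (C × C))
    (y : C) : Finset C × Finset (C × C) :=
  if givesBirth L f y then (insert y st.1, st.2)
  else
    let A : Finset C :=
      if h : ∃! A : Finset C, A ⊆ st.1 ∧
          HomBelow L f (f y) (∑ x ∈ A, canCycle L f x) (col L y)
      then h.exists.choose else ∅
    let s := maxCellD f A y
    (st.1.erase s, insert (s, y) st.2)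

/-- The state of the persistence pairing after processing all cells. -/
noncomputable def pairState (L : LC C) (f : C → ℝ) : Finset C × Finset (C × C) :=
  (sortedCells L f).foldl (pairStep L f) (∅, ∅)

/-- The birth-death pairs `BD(f)` of the filter `f`. -/
noncomputable def BD (L : LC C) (f : C → ℝ) : Finset (C × C) :=
  (pairState L f).2

/-- The state of the persistence pairing after processing the cells with
filter value `< b`. -/
noncomputable def stateBelow (L : LC C) (f : C → ℝ) (b : ℝ) :
    Finset C × Finset (C × C) :=
  ((sortedCells L f).filter (fun x => decide (f x < b))).foldl (pairStep L f) (∅, ∅)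

/-- The birth-giving cells with value `< b` that are unpaired by the
persistence pairing restricted to the sublevel set below `b`. -/
noncomputable def unpairedBelow (L : LC C) (f : C → ℝ) (b : ℝ) : Finset C :=
  (stateBelow L f b).1

/-- `(s,t)` is a shallow pair: `s` is the facet of `t` with maximal filter
value and `t` is the cofacet of `s` with minimal filter value. -/
def IsShallow (L : LC C) (f : C → ℝ) (s t : C) : Prop :=
  L.bd s t = 1 ∧ (∀ x, L.bd x t ≠ 0 → f x ≤ f s) ∧ (∀ y, L.bd s y ≠ 0 → f t ≤ f y)

/-- Cancel a list of pairs in sequence. -/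
noncomputable def cancelList : LC C → List (C × C) → LC C
  | L, [] => L
  | L, p :: ps => cancelList (cancel L p.1 p.2) ps

/-- The quotient after canceling the first `k` pairs of the sequence `Φ`. -/
noncomputable def quotAt (L : LC C) {n : ℕ} (Φ : Fin n → C × C) (k : ℕ) : LC C :=
  cancelList L ((List.ofFn Φ).take k)

/-- `Φ` is a shallow order: an enumeration of the birth-death pairs of `f`
such that each pair is shallow for the quotient obtained by canceling all
preceding pairs. -/
def IsShallowOrder (L : LC C) (f : C → ℝ) {n : ℕ} (Φ : Fin n → C × C) : Prop :=
  Function.Injective Φ ∧ (∀ i, Φ i ∈ BD L f) ∧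
  ∀ i : Fin n, IsShallow (quotAt L Φ i) f (Φ i).1 (Φ i).2

/-- The depth poset: the intersection of the strict total orders induced on
`BD(f)` by all shallow orders. -/
def DepthRel (L : LC C) (f : C → ℝ) (φ ψ : C × C) : Prop :=
  φ ∈ BD L f ∧ ψ ∈ BD L f ∧
  ∀ Φ : Fin (BD L f).card → C × C, IsShallowOrder L f Φ →
    ∀ i j : Fin (BD L f).card, Φ i = φ → Φ j = ψ → i < j

/-- The rank of the lower-left minor of the ordered boundary matrix with rows
the cells of filter value `≥ a` and columns the cells of filter value `≤ b`. -/
noncomputable def llRank (L : LC C) (f : C → ℝ) (a b : ℝ) : ℕ :=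
  Matrix.rank (Matrix.of fun (x : {x : C // x ∈ L.cells ∧ a ≤ f x})
    (y : {y : C // y ∈ L.cells ∧ f y ≤ b}) => L.bd x.1 y.1)

/-- `Φ` and `Ψ` differ by transposing two adjacent positions. -/
def AdjSwap {n : ℕ} (Φ Ψ : Fin n → C × C) : Prop :=
  ∃ (k : Fin n) (hk : (k : ℕ) + 1 < n),
    Ψ k = Φ ⟨k + 1, hk⟩ ∧ Ψ ⟨k + 1, hk⟩ = Φ k ∧
    ∀ i : Fin n, i ≠ k → i ≠ ⟨k + 1, hk⟩ → Ψ i = Φ i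
/-! ### Auxiliary theory for Statement 17 -/

section Aux17

variable {C : Type} [Fintype C] [DecidableEq C] {f : C → ℝ}

private lemma zmod2_eq_one {a : ZMod 2} (h : a ≠ 0) : a = 1 := by
  revert h; revert a; decide

private lemma zmod2_one_ne_zero : (1 : ZMod 2) ≠ 0 := by decide

/-- Two pairs of cells are disjoint. -/
def PDisj (p q : C × C) : Prop :=
  p.1 ≠ q.1 ∧ p.1 ≠ q.2 ∧ p.2 ≠ q.1 ∧ p.2 ≠ q.2

lemma PDisj.symm {p q : C × C} (h : PDisj p q) : PDisj q p :=
  ⟨h.1.symm, h.2.2.1.symm, h.2.1.symm, h.2.2.2.symm⟩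

lemma PDisj.elim' {p q : C × C} (h : PDisj p q) :
    p.1 ≠ q.1 ∧ p.1 ≠ q.2 ∧ p.2 ≠ q.1 ∧ p.2 ≠ q.2 := h

lemma cancel_cells {L : LC C} {s t : C} (hst : L.bd s t = 1) :
    (cancel L s t).cells = L.cells \ {s, t} := by
  rw [cancel, dif_pos hst]

lemma cancel_dim {L : LC C} {s t : C} (hst : L.bd s t = 1) :
    (cancel L s t).dim = L.dim := by
  rw [cancel, dif_pos hst]

lemma cancel_bd {L : LC C} {s t : C} (hst : L.bd s t = 1) :
    (cancel L s t).bd = cancelBd L s t := by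
  rw [cancel, dif_pos hst]

lemma IsShallow.bd1 {L : LC C} {s t : C} (h : IsShallow L f s t) : L.bd s t = 1 := h.1

lemma IsShallow.mem1 {L : LC C} {s t : C} (h : IsShallow L f s t) : s ∈ L.cells :=
  (L.bd_mem s t (by rw [h.1]; exact zmod2_one_ne_zero)).1

lemma IsShallow.mem2 {L : LC C} {s t : C} (h : IsShallow L f s t) : t ∈ L.cells :=
  (L.bd_mem s t (by rw [h.1]; exact zmod2_one_ne_zero)).2

lemma IsShallow.ne {L : LC C} {s t : C} (h : IsShallow L f s t) : s ≠ t := by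
  intro he
  have := h.1
  rw [he, L.bd_self] at this
  exact zmod2_one_ne_zero this.symm

lemma IsShallow.lt {L : LC C} {s t : C} (hf : IsFilter L f) (h : IsShallow L f s t) :
    f s < f t :=
  hf.2 s t (by rw [h.1]; exact zmod2_one_ne_zero)

/-- Canceling a shallow pair preserves the filter property. -/
lemma filter_cancel {L : LC C} {s t : C} (hf : IsFilter L f) (hp : IsShallow L f s t) :
    IsFilter (cancel L s t) f := by
  constructor
  · intro x hx y hy hxy
    rw [cancel_cells hp.1, Finset.mem_sdiff] at hx hy
    exact hf.1 x hx.1 y hy.1 hxy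
  · intro x y hxy
    rw [cancel_bd hp.1] at hxy
    unfold cancelBd at hxy
    split_ifs at hxy with hg
    · by_cases h1 : L.bd x y = 0
      · rw [h1, zero_add] at hxy
        rcases mul_ne_zero_iff.1 hxy with ⟨h2, h3⟩
        have := hp.2.1 x h3
        have := hp.2.2 y h2
        have := hp.lt hf
        linarith
      · exact hf.2 x y h1
    · exact absurd rfl hxy

/-- Key vanishing: for two disjoint shallow pairs the cross terms vanish. -/
lemma shallow_key {L : LC C} {s t u v : C} (hf : IsFilter L f)
    (hp : IsShallow L f s t) (hq : IsShallow L f u v)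
    (hd : u ≠ s ∧ u ≠ t ∧ v ≠ s ∧ v ≠ t) : L.bd s v * L.bd u t = 0 := by
  by_contra hk
  rcases mul_ne_zero_iff.1 hk with ⟨h1, h2⟩
  have hus : f u ≤ f s := hp.2.1 u h2
  have hsu : f s ≤ f u := hq.2.1 s h1
  have : s = u := hf.1 s hp.mem1 u hq.mem1 (le_antisymm hsu hus)
  exact hd.1 this.symm

/-- A shallow pair remains shallow after canceling another disjoint shallow pair. -/
lemma shallow_cancel {L : LC C} {s t u v : C} (hf : IsFilter L f)
    (hp : IsShallow L f s t) (hq : IsShallow L f u v)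
    (hd : u ≠ s ∧ u ≠ t ∧ v ≠ s ∧ v ≠ t) : IsShallow (cancel L s t) f u v := by
  have key := shallow_key hf hp hq hd
  have hu : u ∈ L.cells \ {s, t} := by
    simp only [Finset.mem_sdiff, Finset.mem_insert, Finset.mem_singleton]
    exact ⟨hq.mem1, by tauto⟩
  have hv : v ∈ L.cells \ {s, t} := by
    simp only [Finset.mem_sdiff, Finset.mem_insert, Finset.mem_singleton]
    exact ⟨hq.mem2, by tauto⟩
  refine ⟨?_, ?_, ?_⟩
  · rw [cancel_bd hp.1]
    unfold cancelBd
    rw [if_pos ⟨hu, hv⟩, hq.1, key, add_zero]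
  · intro x hx
    rw [cancel_bd hp.1] at hx
    unfold cancelBd at hx
    split_ifs at hx with hg
    · by_cases h1 : L.bd x v = 0
      · rw [h1, zero_add] at hx
        rcases mul_ne_zero_iff.1 hx with ⟨h2, h3⟩
        exact le_trans (hp.2.1 x h3) (hq.2.1 s h2)
      · exact hq.2.1 x h1
    · exact absurd rfl hx
  · intro y hy
    rw [cancel_bd hp.1] at hy
    unfold cancelBd at hy
    split_ifs at hy with hg
    · by_cases h1 : L.bd u y = 0
      · rw [h1, zero_add] at hy
        rcases mul_ne_zero_iff.1 hy with ⟨h2, h3⟩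
        exact le_trans (hq.2.2 t h3) (hp.2.2 y h2)
      · exact hq.2.2 y h1
    · exact absurd rfl hy

private lemma LC.ext' {L₁ L₂ : LC C} (h1 : L₁.cells = L₂.cells)
    (h2 : L₁.dim = L₂.dim) (h3 : L₁.bd = L₂.bd) : L₁ = L₂ := by
  cases L₁
  cases L₂
  simp only at h1 h2 h3
  subst h1; subst h2; subst h3
  rfl

/-- Cancellations of disjoint shallow pairs commute. -/
lemma cancel_comm {L : LC C} {s t u v : C} (hf : IsFilter L f)
    (hp : IsShallow L f s t) (hq : IsShallow L f u v)
    (hd : u ≠ s ∧ u ≠ t ∧ v ≠ s ∧ v ≠ t) :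
    cancel (cancel L s t) u v = cancel (cancel L u v) s t := by
  have hd' : s ≠ u ∧ s ≠ v ∧ t ≠ u ∧ t ≠ v :=
    ⟨hd.1.symm, hd.2.2.1.symm, hd.2.1.symm, hd.2.2.2.symm⟩
  have key := shallow_key hf hp hq hd
  have h1 : (cancel L s t).bd u v = 1 := (shallow_cancel hf hp hq hd).1
  have h2 : (cancel L u v).bd s t = 1 := (shallow_cancel hf hq hp hd').1
  have hcells : (L.cells \ {s, t}) \ {u, v} = (L.cells \ {u, v}) \ {s, t} := by
    ext z; simp only [Finset.mem_sdiff, Finset.mem_insert, Finset.mem_singleton]; tauto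
  have hu : u ∈ L.cells \ {s, t} := by
    simp only [Finset.mem_sdiff, Finset.mem_insert, Finset.mem_singleton]
    exact ⟨hq.mem1, by tauto⟩
  have hv : v ∈ L.cells \ {s, t} := by
    simp only [Finset.mem_sdiff, Finset.mem_insert, Finset.mem_singleton]
    exact ⟨hq.mem2, by tauto⟩
  have hs : s ∈ L.cells \ {u, v} := by
    simp only [Finset.mem_sdiff, Finset.mem_insert, Finset.mem_singleton]
    exact ⟨hp.mem1, by tauto⟩
  have ht : t ∈ L.cells \ {u, v} := by
    simp only [Finset.mem_sdiff, Finset.mem_insert, Finset.mem_singleton]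
    exact ⟨hp.mem2, by tauto⟩
  apply LC.ext'
  · rw [cancel_cells h1, cancel_cells h2, cancel_cells hp.1, cancel_cells hq.1, hcells]
  · rw [cancel_dim h1, cancel_dim h2, cancel_dim hp.1, cancel_dim hq.1]
  · funext x y
    rw [cancel_bd h1, cancel_bd h2]
    unfold cancelBd
    rw [cancel_cells hp.1, cancel_cells hq.1, cancel_bd hp.1, cancel_bd hq.1, hcells]
    by_cases hg : x ∈ (L.cells \ {u, v}) \ {s, t} ∧ y ∈ (L.cells \ {u, v}) \ {s, t}
    · rw [if_pos hg, if_pos hg]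
      have hx1 : x ∈ L.cells \ {s, t} := by
        have := hg.1; rw [← hcells] at this
        exact (Finset.mem_sdiff.1 this).1
      have hy1 : y ∈ L.cells \ {s, t} := by
        have := hg.2; rw [← hcells] at this
        exact (Finset.mem_sdiff.1 this).1
      have hx2 : x ∈ L.cells \ {u, v} := (Finset.mem_sdiff.1 hg.1).1
      have hy2 : y ∈ L.cells \ {u, v} := (Finset.mem_sdiff.1 hg.2).1
      unfold cancelBd
      rw [if_pos ⟨hx1, hy1⟩, if_pos ⟨hu, hy1⟩, if_pos ⟨hx1, hv⟩,
        if_pos ⟨hx2, hy2⟩, if_pos ⟨hs, hy2⟩, if_pos ⟨hx2, ht⟩]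
      linear_combination (L.bd s y * L.bd x t - L.bd u y * L.bd x v) * key
    · rw [if_neg hg, if_neg hg]

end Aux17

section Aux17b

set_option linter.unusedSectionVars false

variable {C : Type} [Fintype C] [DecidableEq C] {f : C → ℝ}

/-- A sequence of pairs each shallow in the successive quotients. -/
def SSeq (f : C → ℝ) : LC C → List (C × C) → Prop
  | _, [] => True
  | Q, q :: l => IsShallow Q f q.1 q.2 ∧ SSeq f (cancel Q q.1 q.2) l

@[simp] lemma SSeq_nil {Q : LC C} : SSeq f Q [] := trivial

@[simp] lemma SSeq_cons {Q : LC C} {q : C × C} {l : List (C × C)} :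
    SSeq f Q (q :: l) ↔ IsShallow Q f q.1 q.2 ∧ SSeq f (cancel Q q.1 q.2) l := Iff.rfl

@[simp] lemma cancelList_nil {Q : LC C} : cancelList Q ([] : List (C × C)) = Q := rfl

@[simp] lemma cancelList_cons {Q : LC C} {q : C × C} {l : List (C × C)} :
    cancelList Q (q :: l) = cancelList (cancel Q q.1 q.2) l := rfl

lemma cancelList_append {Q : LC C} {l₁ l₂ : List (C × C)} :
    cancelList Q (l₁ ++ l₂) = cancelList (cancelList Q l₁) l₂ := by
  induction l₁ generalizing Q with
  | nil => rfl
  | cons q l ih => simp [ih]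

lemma SSeq_append {Q : LC C} {l₁ l₂ : List (C × C)} :
    SSeq f Q (l₁ ++ l₂) ↔ SSeq f Q l₁ ∧ SSeq f (cancelList Q l₁) l₂ := by
  induction l₁ generalizing Q with
  | nil => simp
  | cons q l ih => simp [ih, and_assoc]

lemma SSeq_take {Q : LC C} {l : List (C × C)} (h : SSeq f Q l) (k : ℕ) :
    SSeq f Q (l.take k) := by
  have := List.take_append_drop k l
  rw [← this] at h
  exact (SSeq_append.1 h).1

lemma SSeq_filter {Q : LC C} {l : List (C × C)} (hf : IsFilter Q f) (h : SSeq f Q l) :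
    IsFilter (cancelList Q l) f := by
  induction l generalizing Q with
  | nil => exact hf
  | cons q l ih => exact ih (filter_cancel hf h.1) h.2

lemma SSeq_mem_cells {Q : LC C} {l : List (C × C)} (h : SSeq f Q l) :
    ∀ q ∈ l, q.1 ∈ Q.cells ∧ q.2 ∈ Q.cells := by
  induction l generalizing Q with
  | nil => intro q hq; cases hq
  | cons p l ih =>
    intro q hq
    rcases List.mem_cons.1 hq with hq | hq
    · subst hq; exact ⟨h.1.mem1, h.1.mem2⟩
    · have := ih h.2 q hq
      rw [cancel_cells h.1.1] at this
      exact ⟨(Finset.mem_sdiff.1 this.1).1, (Finset.mem_sdiff.1 this.2).1⟩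

lemma SSeq_pairwise {Q : LC C} {l : List (C × C)} (h : SSeq f Q l) :
    l.Pairwise PDisj := by
  induction l generalizing Q with
  | nil => exact List.Pairwise.nil
  | cons p l ih =>
    refine List.Pairwise.cons ?_ (ih h.2)
    intro q hq
    have hm := SSeq_mem_cells h.2 q hq
    rw [cancel_cells h.1.1] at hm
    simp only [Finset.mem_sdiff, Finset.mem_insert, Finset.mem_singleton] at hm
    push_neg at hm
    exact ⟨(hm.1.2.1).symm, (hm.2.2.1).symm, (hm.1.2.2).symm, (hm.2.2.2).symm⟩

lemma SSeq_iff {Q : LC C} {l : List (C × C)} :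
    SSeq f Q l ↔ ∀ (k : ℕ) (h : k < l.length),
      IsShallow (cancelList Q (l.take k)) f (l[k].1) (l[k].2) := by
  induction l generalizing Q with
  | nil => simp
  | cons p l ih =>
    constructor
    · rintro ⟨hp, hl⟩ k hk
      match k with
      | 0 => simpa using hp
      | k + 1 =>
        have := (ih.1 hl) k (by simpa using hk)
        simpa using this
    · intro h
      refine ⟨h 0 (by simp), ih.2 ?_⟩
      intro k hk
      have := h (k + 1) (by simpa using hk)
      simpa using this

/-- A shallow pair stays shallow along a disjoint shallow sequence. -/
lemma shallow_along {Q : LC C} {l : List (C × C)} {x : C × C} (hf : IsFilter Q f)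
    (hl : SSeq f Q l) (hx : IsShallow Q f x.1 x.2) (hd : ∀ q ∈ l, PDisj q x) :
    IsShallow (cancelList Q l) f x.1 x.2 := by
  induction l generalizing Q with
  | nil => exact hx
  | cons q l ih =>
    have hdq := hd q (by simp)
    refine ih (filter_cancel hf hl.1) hl.2 ?_ fun r hr => hd r (by simp [hr])
    exact shallow_cancel hf hl.1 hx hdq.symm.elim'

/-- Bubbling a pair that is shallow in `Q` to the front of a shallow sequence. -/
lemma bubble {Q : LC C} {l : List (C × C)} {x : C × C} (hf : IsFilter Q f)
    (hl : SSeq f Q l) (hx : IsShallow Q f x.1 x.2) (hmem : x ∈ l)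
    (hpd : l.Pairwise PDisj) :
    SSeq f Q (x :: l.erase x) ∧ cancelList Q (x :: l.erase x) = cancelList Q l := by
  induction l generalizing Q with
  | nil => cases hmem
  | cons p l ih =>
    by_cases hxp : x = p
    · subst hxp
      rw [List.erase_cons_head]
      exact ⟨hl, rfl⟩
    · have hmem' : x ∈ l := by
        rcases List.mem_cons.1 hmem with h' | h'
        · exact absurd h' hxp
        · exact h'
      have hdpx : PDisj p x := (List.pairwise_cons.1 hpd).1 x hmem'
      have hdxp : PDisj x p := hdpx.symm
      have hf' : IsFilter (cancel Q p.1 p.2) f := filter_cancel hf hl.1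
      have hx' : IsShallow (cancel Q p.1 p.2) f x.1 x.2 :=
        shallow_cancel hf hl.1 hx hdxp.elim'
      have := ih hf' hl.2 hx' hmem' (List.pairwise_cons.1 hpd).2
      have herase : (p :: l).erase x = p :: l.erase x := by
        refine List.erase_cons_tail ?_
        simp only [beq_iff_eq]
        exact Ne.symm hxp
      rw [herase]
      have hcomm : cancel (cancel Q x.1 x.2) p.1 p.2 = cancel (cancel Q p.1 p.2) x.1 x.2 :=
        cancel_comm hf hx hl.1 hdpx.elim'
      constructor
      · refine ⟨hx, ?_, ?_⟩
        · exact shallow_cancel hf hx hl.1 hdpx.elim'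
        · rw [hcomm]
          exact this.1.2
      · show cancelList (cancel (cancel Q x.1 x.2) p.1 p.2) (l.erase x) = _
        rw [hcomm]
        have h2 : cancelList (cancel (cancel Q p.1 p.2) x.1 x.2) (l.erase x)
            = cancelList (cancel Q p.1 p.2) l := this.2
        exact h2

end Aux17b

section Aux17c

set_option linter.unusedSectionVars false

variable {C : Type} [Fintype C] [DecidableEq C] {f : C → ℝ}

/-- A shallow sequence can be reordered to start with any shallow subsequence. -/
lemma reorder {Q : LC C} {l m : List (C × C)} (hf : IsFilter Q f)
    (hl : SSeq f Q l) (hm : SSeq f Q m) (hsub : ∀ q ∈ m, q ∈ l) (hnd : m.Nodup) :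
    ∃ l', SSeq f Q (m ++ l') ∧ cancelList Q (m ++ l') = cancelList Q l ∧
      ∀ q ∈ l', q ∈ l := by
  induction m generalizing Q l with
  | nil => exact ⟨l, by simpa using hl, rfl, fun q hq => hq⟩
  | cons y m ih =>
    have hy : y ∈ l := hsub y (by simp)
    have hbub := bubble hf hl hm.1 hy (SSeq_pairwise hl)
    have hf' : IsFilter (cancel Q y.1 y.2) f := filter_cancel hf hm.1
    have hsub' : ∀ q ∈ m, q ∈ l.erase y := by
      intro q hq
      have hqy : q ≠ y := by
        rintro rfl
        exact (List.nodup_cons.1 hnd).1 hq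
      exact (List.mem_erase_of_ne hqy).2 (hsub q (by simp [hq]))
    obtain ⟨l', h1, h2, h3⟩ := ih hf' hbub.1.2 hm.2 hsub' (List.nodup_cons.1 hnd).2
    refine ⟨l', ⟨hm.1, h1⟩, ?_, ?_⟩
    · show cancelList (cancel Q y.1 y.2) (m ++ l') = _
      rw [h2]
      have h4 : cancelList (cancel Q y.1 y.2) (l.erase y) = cancelList Q l := by
        simpa using hbub.2
      exact h4
    · intro q hq
      exact List.mem_of_mem_erase (h3 q hq)

/-- A route for the pair `p`: a shallow sequence of pairs from `U`, distinct
from `p`, after whose cancellation `p` is shallow. -/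
def Route (f : C → ℝ) (Q : LC C) (U : Finset (C × C)) (p : C × C)
    (l : List (C × C)) : Prop :=
  SSeq f Q l ∧ l.Nodup ∧ (∀ q ∈ l, q ∈ U ∧ q ≠ p) ∧
    IsShallow (cancelList Q l) f p.1 p.2

/-- Invariant: the maximal facet of `t` persists along shallow sequences
avoiding it. -/
lemma facet_inv {Q : LC C} {l : List (C × C)} {a t : C} (hf : IsFilter Q f)
    (hl : SSeq f Q l)
    (havoid : ∀ q ∈ l, q.1 ≠ t ∧ q.2 ≠ t ∧ q.1 ≠ a ∧ q.2 ≠ a)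
    (h1 : Q.bd a t = 1) (h2 : ∀ y, Q.bd y t ≠ 0 → f y ≤ f a) :
    (cancelList Q l).bd a t = 1 ∧ ∀ y, (cancelList Q l).bd y t ≠ 0 → f y ≤ f a := by
  induction l generalizing Q with
  | nil => exact ⟨h1, h2⟩
  | cons q l ih =>
    have hq : IsShallow Q f q.1 q.2 := hl.1
    have hav := havoid q (by simp)
    have hmem_a : a ∈ Q.cells := (Q.bd_mem a t (by rw [h1]; exact zmod2_one_ne_zero)).1
    have hmem_t : t ∈ Q.cells := (Q.bd_mem a t (by rw [h1]; exact zmod2_one_ne_zero)).2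
    have h1' : (cancel Q q.1 q.2).bd a t = 1 := by
      rw [cancel_bd hq.1]
      unfold cancelBd
      rw [if_pos]
      · have hX : Q.bd q.1 t * Q.bd a q.2 = 0 := by
          by_contra hk
          rcases mul_ne_zero_iff.1 hk with ⟨k1, k2⟩
          have ha1 : f q.1 ≤ f a := h2 q.1 k1
          have ha2 : f a ≤ f q.1 := hq.2.1 a k2
          have : q.1 = a := hf.1 q.1 hq.mem1 a hmem_a (le_antisymm ha1 ha2)
          exact hav.2.2.1 this
        rw [h1, hX, add_zero]
      · constructor
        · simp only [Finset.mem_sdiff, Finset.mem_insert, Finset.mem_singleton]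
          exact ⟨hmem_a, by push_neg; exact ⟨fun h => hav.2.2.1 h.symm, fun h => hav.2.2.2 h.symm⟩⟩
        · simp only [Finset.mem_sdiff, Finset.mem_insert, Finset.mem_singleton]
          exact ⟨hmem_t, by push_neg; exact ⟨fun h => hav.1 h.symm, fun h => hav.2.1 h.symm⟩⟩
    have h2' : ∀ y, (cancel Q q.1 q.2).bd y t ≠ 0 → f y ≤ f a := by
      intro y hy
      rw [cancel_bd hq.1] at hy
      unfold cancelBd at hy
      split_ifs at hy with hg
      · by_cases hc : Q.bd y t = 0
        · rw [hc, zero_add] at hy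
          rcases mul_ne_zero_iff.1 hy with ⟨k1, k2⟩
          exact le_trans (hq.2.1 y k2) (h2 q.1 k1)
        · exact h2 y hc
      · exact absurd rfl hy
    exact ih (filter_cancel hf hq) hl.2 (fun r hr => havoid r (by simp [hr])) h1' h2'

/-- Invariant: the minimal cofacet of `s` persists along shallow sequences
avoiding it. -/
lemma cofacet_inv {Q : LC C} {l : List (C × C)} {s b : C} (hf : IsFilter Q f)
    (hl : SSeq f Q l)
    (havoid : ∀ q ∈ l, q.1 ≠ s ∧ q.2 ≠ s ∧ q.1 ≠ b ∧ q.2 ≠ b)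
    (h1 : Q.bd s b = 1) (h2 : ∀ y, Q.bd s y ≠ 0 → f b ≤ f y) :
    (cancelList Q l).bd s b = 1 ∧ ∀ y, (cancelList Q l).bd s y ≠ 0 → f b ≤ f y := by
  induction l generalizing Q with
  | nil => exact ⟨h1, h2⟩
  | cons q l ih =>
    have hq : IsShallow Q f q.1 q.2 := hl.1
    have hav := havoid q (by simp)
    have hmem_s : s ∈ Q.cells := (Q.bd_mem s b (by rw [h1]; exact zmod2_one_ne_zero)).1
    have hmem_b : b ∈ Q.cells := (Q.bd_mem s b (by rw [h1]; exact zmod2_one_ne_zero)).2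
    have h1' : (cancel Q q.1 q.2).bd s b = 1 := by
      rw [cancel_bd hq.1]
      unfold cancelBd
      rw [if_pos]
      · have hX : Q.bd q.1 b * Q.bd s q.2 = 0 := by
          by_contra hk
          rcases mul_ne_zero_iff.1 hk with ⟨k1, k2⟩
          have hb1 : f b ≤ f q.2 := h2 q.2 k2
          have hb2 : f q.2 ≤ f b := hq.2.2 b k1
          have : q.2 = b := hf.1 q.2 hq.mem2 b hmem_b (le_antisymm hb2 hb1)
          exact hav.2.2.2 this
        rw [h1, hX, add_zero]
      · constructor
        · simp only [Finset.mem_sdiff, Finset.mem_insert, Finset.mem_singleton]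
          exact ⟨hmem_s, by push_neg; exact ⟨fun h => hav.1 h.symm, fun h => hav.2.1 h.symm⟩⟩
        · simp only [Finset.mem_sdiff, Finset.mem_insert, Finset.mem_singleton]
          exact ⟨hmem_b, by push_neg; exact ⟨fun h => hav.2.2.1 h.symm, fun h => hav.2.2.2 h.symm⟩⟩
    have h2' : ∀ y, (cancel Q q.1 q.2).bd s y ≠ 0 → f b ≤ f y := by
      intro y hy
      rw [cancel_bd hq.1] at hy
      unfold cancelBd at hy
      split_ifs at hy with hg
      · by_cases hc : Q.bd s y = 0
        · rw [hc, zero_add] at hy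
          rcases mul_ne_zero_iff.1 hy with ⟨k1, k2⟩
          exact le_trans (h2 q.2 k2) (hq.2.2 y k1)
        · exact h2 y hc
      · exact absurd rfl hy
    exact ih (filter_cancel hf hq) hl.2 (fun r hr => havoid r (by simp [hr])) h1' h2'

/-- Invariant: if `t` has no facet above `f s` and `(s,t)` is not an incidence,
this persists along shallow sequences avoiding `s`. -/
lemma nofacet_inv {Q : LC C} {l : List (C × C)} {s t : C} (hf : IsFilter Q f)
    (hl : SSeq f Q l)
    (havoid : ∀ q ∈ l, q.1 ≠ s ∧ q.2 ≠ s)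
    (h1 : Q.bd s t = 0) (h2 : ∀ y, Q.bd y t ≠ 0 → f y ≤ f s) :
    (cancelList Q l).bd s t = 0 ∧ ∀ y, (cancelList Q l).bd y t ≠ 0 → f y ≤ f s := by
  induction l generalizing Q with
  | nil => exact ⟨h1, h2⟩
  | cons q l ih =>
    have hq : IsShallow Q f q.1 q.2 := hl.1
    have hav := havoid q (by simp)
    have h1' : (cancel Q q.1 q.2).bd s t = 0 := by
      rw [cancel_bd hq.1]
      unfold cancelBd
      split_ifs with hg
      · have hX : Q.bd q.1 t * Q.bd s q.2 = 0 := by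
          by_contra hk
          rcases mul_ne_zero_iff.1 hk with ⟨k1, k2⟩
          have hs1 : f q.1 ≤ f s := h2 q.1 k1
          have hs2 : f s ≤ f q.1 := hq.2.1 s k2
          have hsc : s ∈ Q.cells := (Q.bd_mem s q.2 k2).1
          have : q.1 = s := hf.1 q.1 hq.mem1 s hsc (le_antisymm hs1 hs2)
          exact hav.1 this
        rw [h1, hX, add_zero]
      · rfl
    have h2' : ∀ y, (cancel Q q.1 q.2).bd y t ≠ 0 → f y ≤ f s := by
      intro y hy
      rw [cancel_bd hq.1] at hy
      unfold cancelBd at hy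
      split_ifs at hy with hg
      · by_cases hc : Q.bd y t = 0
        · rw [hc, zero_add] at hy
          rcases mul_ne_zero_iff.1 hy with ⟨k1, k2⟩
          exact le_trans (hq.2.1 y k2) (h2 q.1 k1)
        · exact h2 y hc
      · exact absurd rfl hy
    exact ih (filter_cancel hf hq) hl.2 (fun r hr => havoid r (by simp [hr])) h1' h2'

end Aux17c

section Aux17d

set_option linter.unusedSectionVars false

variable {C : Type} [Fintype C] [DecidableEq C] {f : C → ℝ}

private lemma zmod2_eq_zero {a : ZMod 2} (h : a ≠ 1) : a = 0 := by
  revert h; revert a; decide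

/-- If `p` is not shallow in `Q` but some route exists, then there is a pair
that belongs to every route of `p`. -/
lemma forcing {Q : LC C} {U : Finset (C × C)} {p : C × C} (hf : IsFilter Q f)
    (hU : ∀ p₁ ∈ U, ∀ p₂ ∈ U, p₁ ≠ p₂ → PDisj p₁ p₂) (hpU : p ∈ U)
    (hns : ¬ IsShallow Q f p.1 p.2) {l₀ : List (C × C)} (hl₀ : Route f Q U p l₀) :
    ∃ x, ∀ l, Route f Q U p l → x ∈ l := by
  have hdisj : ∀ {l : List (C × C)}, Route f Q U p l → ∀ q ∈ l, PDisj q p := by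
    intro l hl q hq
    exact hU q (hl.2.2.1 q hq).1 p hpU (hl.2.2.1 q hq).2
  by_cases hbf : ∃ y, Q.bd y p.2 ≠ 0 ∧ f p.1 < f y
  · -- bad facet case
    obtain ⟨y₀, hy₀, hy₀f⟩ := hbf
    have hy₀c : y₀ ∈ Q.cells := (Q.bd_mem _ _ hy₀).1
    have hFne : (Q.cells.filter (fun y => Q.bd y p.2 ≠ 0)).Nonempty :=
      ⟨y₀, Finset.mem_filter.2 ⟨hy₀c, hy₀⟩⟩
    obtain ⟨a, haF, hamax⟩ := Finset.exists_max_image _ f hFne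
    have ha_bd : Q.bd a p.2 = 1 := zmod2_eq_one (Finset.mem_filter.1 haF).2
    have hsa : f p.1 < f a := lt_of_lt_of_le hy₀f (hamax y₀ (Finset.mem_filter.2 ⟨hy₀c, hy₀⟩))
    have h2 : ∀ z, Q.bd z p.2 ≠ 0 → f z ≤ f a := by
      intro z hz
      exact hamax z (Finset.mem_filter.2 ⟨(Q.bd_mem _ _ hz).1, hz⟩)
    have hit : ∀ l, Route f Q U p l → ∃ q, q ∈ l ∧ (q.1 = a ∨ q.2 = a) := by
      intro l hl
      by_contra hc
      push_neg at hc
      have havoid : ∀ q ∈ l, q.1 ≠ p.2 ∧ q.2 ≠ p.2 ∧ q.1 ≠ a ∧ q.2 ≠ a := by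
        intro q hq
        have hd := hdisj hl q hq
        exact ⟨hd.2.1, hd.2.2.2, (hc q hq).1, (hc q hq).2⟩
      have hinv := facet_inv hf hl.1 havoid ha_bd h2
      have := hl.2.2.2.2.1 a (by rw [hinv.1]; exact zmod2_one_ne_zero)
      linarith
    obtain ⟨x, hxl₀, hxa⟩ := hit l₀ hl₀
    refine ⟨x, fun l hl => ?_⟩
    obtain ⟨q, hql, hqa⟩ := hit l hl
    have hqx : q = x := by
      by_contra hne
      have hd := hU q (hl.2.2.1 q hql).1 x (hl₀.2.2.1 x hxl₀).1 hne
      rcases hqa with h1 | h1 <;> rcases hxa with h2 | h2 <;>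
        [exact hd.1 (h1.trans h2.symm); exact hd.2.1 (h1.trans h2.symm);
         exact hd.2.2.1 (h1.trans h2.symm); exact hd.2.2.2 (h1.trans h2.symm)]
    exact hqx ▸ hql
  · by_cases hbc : ∃ y, Q.bd p.1 y ≠ 0 ∧ f y < f p.2
    · -- bad cofacet case
      obtain ⟨y₀, hy₀, hy₀f⟩ := hbc
      have hy₀c : y₀ ∈ Q.cells := (Q.bd_mem _ _ hy₀).2
      have hFne : (Q.cells.filter (fun y => Q.bd p.1 y ≠ 0)).Nonempty :=
        ⟨y₀, Finset.mem_filter.2 ⟨hy₀c, hy₀⟩⟩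
      obtain ⟨b, hbF, hbmin⟩ := Finset.exists_min_image _ f hFne
      have hb_bd : Q.bd p.1 b = 1 := zmod2_eq_one (Finset.mem_filter.1 hbF).2
      have hsb : f b < f p.2 := lt_of_le_of_lt (hbmin y₀ (Finset.mem_filter.2 ⟨hy₀c, hy₀⟩)) hy₀f
      have h2 : ∀ z, Q.bd p.1 z ≠ 0 → f b ≤ f z := by
        intro z hz
        exact hbmin z (Finset.mem_filter.2 ⟨(Q.bd_mem _ _ hz).2, hz⟩)
      have hit : ∀ l, Route f Q U p l → ∃ q, q ∈ l ∧ (q.1 = b ∨ q.2 = b) := by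
        intro l hl
        by_contra hc
        push_neg at hc
        have havoid : ∀ q ∈ l, q.1 ≠ p.1 ∧ q.2 ≠ p.1 ∧ q.1 ≠ b ∧ q.2 ≠ b := by
          intro q hq
          have hd := hdisj hl q hq
          exact ⟨hd.1, hd.2.2.1, (hc q hq).1, (hc q hq).2⟩
        have hinv := cofacet_inv hf hl.1 havoid hb_bd h2
        have := hl.2.2.2.2.2 b (by rw [hinv.1]; exact zmod2_one_ne_zero)
        linarith
      obtain ⟨x, hxl₀, hxb⟩ := hit l₀ hl₀
      refine ⟨x, fun l hl => ?_⟩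
      obtain ⟨q, hql, hqb⟩ := hit l hl
      have hqx : q = x := by
        by_contra hne
        have hd := hU q (hl.2.2.1 q hql).1 x (hl₀.2.2.1 x hxl₀).1 hne
        rcases hqb with h1 | h1 <;> rcases hxb with h2 | h2 <;>
          [exact hd.1 (h1.trans h2.symm); exact hd.2.1 (h1.trans h2.symm);
           exact hd.2.2.1 (h1.trans h2.symm); exact hd.2.2.2 (h1.trans h2.symm)]
      exact hqx ▸ hql
    · -- no bad facet, no bad cofacet, so the incidence is missing: impossible
      exfalso
      push_neg at hbf hbc
      have hA : ∀ y, Q.bd y p.2 ≠ 0 → f y ≤ f p.1 := fun y hy => hbf y hy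
      have hB : ∀ y, Q.bd p.1 y ≠ 0 → f p.2 ≤ f y := fun y hy => hbc y hy
      have hbd : Q.bd p.1 p.2 ≠ 1 := fun h => hns ⟨h, hA, hB⟩
      have hbd0 : Q.bd p.1 p.2 = 0 := zmod2_eq_zero hbd
      have havoid : ∀ q ∈ l₀, q.1 ≠ p.1 ∧ q.2 ≠ p.1 := by
        intro q hq
        have hd := hdisj hl₀ q hq
        exact ⟨hd.1, hd.2.2.1⟩
      have hinv := nofacet_inv hf hl₀.1 havoid hbd0 hA
      have := hl₀.2.2.2.1
      rw [hinv.1] at this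
      exact zmod2_one_ne_zero this.symm

private lemma pairwise_of_mem_U {U : Finset (C × C)}
    (hU : ∀ p₁ ∈ U, ∀ p₂ ∈ U, p₁ ≠ p₂ → PDisj p₁ p₂) {l : List (C × C)}
    (hnd : l.Nodup) (hmem : ∀ q ∈ l, q ∈ U) : l.Pairwise PDisj := by
  induction l with
  | nil => exact List.Pairwise.nil
  | cons a l ih =>
    refine List.Pairwise.cons ?_ (ih (List.nodup_cons.1 hnd).2
      (fun q hq => hmem q (by simp [hq])))
    intro b hb
    have hab : a ≠ b := by
      rintro rfl
      exact (List.nodup_cons.1 hnd).1 hb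
    exact hU a (hmem a (by simp)) b (hmem b (by simp [hb])) hab

lemma route_prefix {Q : LC C} {U : Finset (C × C)} {p x : C × C}
    {l₁ l₂ : List (C × C)} (h : Route f Q U p (l₁ ++ x :: l₂)) :
    Route f Q U x l₁ := by
  obtain ⟨hs, hnd, hm, _⟩ := h
  have hsplit := SSeq_append.1 hs
  refine ⟨hsplit.1, (List.nodup_append.1 hnd).1, ?_, hsplit.2.1⟩
  intro q hq
  refine ⟨(hm q (List.mem_append_left _ hq)).1, ?_⟩
  intro hqx
  exact (List.nodup_append.1 hnd).2.2 q hq x (by simp) hqx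

/-- Every nonempty collection of routes of `p` has a minimum route. -/
lemma minRoute (N : ℕ) : ∀ (Q : LC C) (U : Finset (C × C)), IsFilter Q f →
    (∀ p₁ ∈ U, ∀ p₂ ∈ U, p₁ ≠ p₂ → PDisj p₁ p₂) → ∀ p ∈ U,
    ∀ l₀, Route f Q U p l₀ → l₀.length ≤ N →
    ∃ M, Route f Q U p M ∧ ∀ l, Route f Q U p l → ∀ q ∈ M, q ∈ l := by
  induction N with
  | zero =>
    intro Q U hf hU p hpU l₀ hl₀ hlen
    have hnil : l₀ = [] := List.length_eq_zero_iff.1 (Nat.le_zero.1 hlen)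
    subst hnil
    exact ⟨[], hl₀, fun l hl q hq => absurd hq List.not_mem_nil⟩
  | succ N ih =>
    intro Q U hf hU p hpU l₀ hl₀ hlen
    by_cases hsh : IsShallow Q f p.1 p.2
    · exact ⟨[], ⟨trivial, List.nodup_nil, by simp, hsh⟩,
        fun l hl q hq => absurd hq List.not_mem_nil⟩
    · obtain ⟨x₀, hx₀⟩ := forcing hf hU hpU hsh hl₀
      have aux : ∀ (K : ℕ) (x : C × C) (l₁ l₂ : List (C × C)), l₀ = l₁ ++ x :: l₂ →
          l₁.length ≤ K → (∀ l, Route f Q U p l → x ∈ l) →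
          ∃ x', (∀ l, Route f Q U p l → x' ∈ l) ∧ IsShallow Q f x'.1 x'.2 := by
        intro K
        induction K with
        | zero =>
          intro x l₁ l₂ hsplit hK hforced
          have hnil : l₁ = [] := List.length_eq_zero_iff.1 (Nat.le_zero.1 hK)
          subst hnil
          have hxs : IsShallow Q f x.1 x.2 := by
            have := hl₀.1
            rw [hsplit] at this
            exact this.1
          exact ⟨x, hforced, hxs⟩
        | succ K ihK =>
          intro x l₁ l₂ hsplit hK hforced
          by_cases hxsh : IsShallow Q f x.1 x.2
          · exact ⟨x, hforced, hxsh⟩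
          · have hl₀x : Route f Q U x l₁ := by
              have := hl₀
              rw [hsplit] at this
              exact route_prefix this
            have hxU : x ∈ U := by
              have := hl₀.2.2.1 x (by rw [hsplit]; simp)
              exact this.1
            obtain ⟨z, hz⟩ := forcing hf hU hxU hxsh hl₀x
            have hzl₁ : z ∈ l₁ := hz l₁ hl₀x
            have hzforced : ∀ l, Route f Q U p l → z ∈ l := by
              intro l hl
              have hxl : x ∈ l := hforced l hl
              obtain ⟨m₁, m₂, hm⟩ := List.append_of_mem hxl
              have hrx : Route f Q U x m₁ := by
                rw [hm] at hl
                exact route_prefix hl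
              have : z ∈ m₁ := hz m₁ hrx
              rw [hm]
              exact List.mem_append_left _ this
            obtain ⟨a, b, hab⟩ := List.append_of_mem hzl₁
            have hsplit' : l₀ = a ++ z :: (b ++ x :: l₂) := by
              rw [hsplit, hab]
              simp
            have hlen' : a.length ≤ K := by
              have h1 : a.length < l₁.length := by
                rw [hab]
                simp only [List.length_append, List.length_cons]
                omega
              omega
            exact ihK z a (b ++ x :: l₂) hsplit' hlen' hzforced
      have hx₀l₀ : x₀ ∈ l₀ := hx₀ l₀ hl₀
      obtain ⟨la, lb, hab₀⟩ := List.append_of_mem hx₀l₀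
      have hla : la.length ≤ l₀.length := by
        rw [hab₀]
        simp only [List.length_append, List.length_cons]
        omega
      obtain ⟨x', hx'forced, hx'sh⟩ := aux l₀.length x₀ la lb hab₀ hla hx₀
      have hx'l₀ : x' ∈ l₀ := hx'forced l₀ hl₀
      have hx'U : x' ∈ U := (hl₀.2.2.1 x' hx'l₀).1
      have hx'p : x' ≠ p := (hl₀.2.2.1 x' hx'l₀).2
      have hf' : IsFilter (cancel Q x'.1 x'.2) f := filter_cancel hf hx'sh
      have hU' : ∀ p₁ ∈ U.erase x', ∀ p₂ ∈ U.erase x', p₁ ≠ p₂ → PDisj p₁ p₂ :=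
        fun p₁ h₁ p₂ h₂ hne =>
          hU p₁ (Finset.mem_of_mem_erase h₁) p₂ (Finset.mem_of_mem_erase h₂) hne
      have hpU' : p ∈ U.erase x' := Finset.mem_erase.2 ⟨Ne.symm hx'p, hpU⟩
      have routeErase : ∀ l, Route f Q U p l → x' ∈ l →
          Route f (cancel Q x'.1 x'.2) (U.erase x') p (l.erase x') := by
        intro l hl hxl
        have hpx : l.Pairwise PDisj :=
          pairwise_of_mem_U hU hl.2.1 (fun q hq => (hl.2.2.1 q hq).1)
        have hb := bubble hf hl.1 hx'sh hxl hpx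
        refine ⟨hb.1.2, hl.2.1.erase x', ?_, ?_⟩
        · intro q hq
          have hql : q ∈ l := List.mem_of_mem_erase hq
          have hqx : q ≠ x' := ((List.Nodup.mem_erase_iff hl.2.1).1 hq).1
          exact ⟨Finset.mem_erase.2 ⟨hqx, (hl.2.2.1 q hql).1⟩, (hl.2.2.1 q hql).2⟩
        · have heq : cancelList (cancel Q x'.1 x'.2) (l.erase x') = cancelList Q l := by
            simpa using hb.2
          rw [heq]
          exact hl.2.2.2
      have hroute' := routeErase l₀ hl₀ hx'l₀
      have hlen' : (l₀.erase x').length ≤ N := by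
        rw [List.length_erase_of_mem hx'l₀]
        have : 1 ≤ l₀.length := by
          rcases l₀ with _ | ⟨c, l⟩
          · cases hx'l₀
          · simp
        omega
      obtain ⟨M', hM', hmin'⟩ := ih (cancel Q x'.1 x'.2) (U.erase x') hf' hU' p hpU'
        (l₀.erase x') hroute' hlen'
      refine ⟨x' :: M', ?_, ?_⟩
      · refine ⟨⟨hx'sh, hM'.1⟩, ?_, ?_, ?_⟩
        · refine List.nodup_cons.2 ⟨?_, hM'.2.1⟩
          intro hmem
          exact (Finset.mem_erase.1 (hM'.2.2.1 x' hmem).1).1 rfl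
        · intro q hq
          rcases List.mem_cons.1 hq with rfl | hq'
          · exact ⟨hx'U, hx'p⟩
          · exact ⟨Finset.mem_of_mem_erase (hM'.2.2.1 q hq').1, (hM'.2.2.1 q hq').2⟩
        · exact hM'.2.2.2
      · intro l hl q hq
        have hxl : x' ∈ l := hx'forced l hl
        rcases List.mem_cons.1 hq with rfl | hq'
        · exact hxl
        · exact List.mem_of_mem_erase (hmin' (l.erase x') (routeErase l hl hxl) q hq')

end Aux17d

section Aux17e

set_option linter.unusedSectionVars false

variable {C : Type} [Fintype C] [DecidableEq C] {f : C → ℝ}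

lemma sseq_of_order {L : LC C} {n : ℕ} {Ψ : Fin n → C × C}
    (h : ∀ i : Fin n, IsShallow (quotAt L Ψ i) f (Ψ i).1 (Ψ i).2) :
    SSeq f L (List.ofFn Ψ) := by
  rw [SSeq_iff]
  intro k hk
  have hk' : k < n := by simpa using hk
  have hg : (List.ofFn Ψ)[k] = Ψ ⟨k, hk'⟩ := by simp [List.getElem_ofFn]
  rw [hg]
  exact h ⟨k, hk'⟩

lemma order_shallow_of_sseq {L : LC C} {n : ℕ} {Φ : Fin n → C × C}
    (h : SSeq f L (List.ofFn Φ)) (i : Fin n) :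
    IsShallow (quotAt L Φ i) f (Φ i).1 (Φ i).2 := by
  have hk : (i : ℕ) < (List.ofFn Φ).length := by simp [i.isLt]
  have h2 := SSeq_iff.1 h i hk
  have hg : (List.ofFn Φ)[(i : ℕ)] = Φ i := by simp [List.getElem_ofFn]
  rwa [hg] at h2

lemma mem_take_ofFn {n k : ℕ} {Φ : Fin n → C × C} {r : C × C} :
    r ∈ (List.ofFn Φ).take k ↔ ∃ j : Fin n, (j : ℕ) < k ∧ Φ j = r := by
  constructor
  · intro hr
    obtain ⟨m, hm, hget⟩ := List.mem_iff_getElem.1 hr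
    have hm' : m < k ∧ m < n := by
      simp only [List.length_take, List.length_ofFn, lt_min_iff] at hm
      exact hm
    refine ⟨⟨m, hm'.2⟩, hm'.1, ?_⟩
    rw [← hget, List.getElem_take, List.getElem_ofFn]
  · rintro ⟨j, hj, rfl⟩
    apply List.mem_iff_getElem.2
    refine ⟨j, ?_, ?_⟩
    · simp only [List.length_take, List.length_ofFn, lt_min_iff]
      exact ⟨hj, j.isLt⟩
    · rw [List.getElem_take, List.getElem_ofFn]

lemma surj_BD {L : LC C} {Φ : Fin (BD L f).card → C × C}
    (hinj : Function.Injective Φ) (hmem : ∀ i, Φ i ∈ BD L f) :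
    ∀ r ∈ BD L f, ∃ i, Φ i = r := by
  intro r hr
  have himg : Finset.univ.image Φ = BD L f := by
    apply Finset.eq_of_subset_of_card_le
    · intro x hx
      obtain ⟨i, _, rfl⟩ := Finset.mem_image.1 hx
      exact hmem i
    · rw [Finset.card_image_of_injective _ hinj, Finset.card_univ, Fintype.card_fin]
  rw [← himg] at hr
  obtain ⟨i, _, hi⟩ := Finset.mem_image.1 hr
  exact ⟨i, hi⟩

lemma BD_pairwise {L : LC C} {Ψ : Fin (BD L f).card → C × C}
    (hΨ : IsShallowOrder L f Ψ) :
    ∀ p₁ ∈ BD L f, ∀ p₂ ∈ BD L f, p₁ ≠ p₂ → PDisj p₁ p₂ := by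
  have hss : SSeq f L (List.ofFn Ψ) := sseq_of_order hΨ.2.2
  have hpw := SSeq_pairwise hss
  rw [List.pairwise_iff_getElem] at hpw
  intro p₁ h₁ p₂ h₂ hne
  obtain ⟨i, rfl⟩ := surj_BD hΨ.1 hΨ.2.1 p₁ h₁
  obtain ⟨j, rfl⟩ := surj_BD hΨ.1 hΨ.2.1 p₂ h₂
  have hij : i ≠ j := fun h => hne (by rw [h])
  rcases lt_or_gt_of_ne hij with h | h
  · have := hpw i j (by simp [i.isLt]) (by simp [j.isLt]) h
    simpa [List.getElem_ofFn] using this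
  · have := hpw j i (by simp [j.isLt]) (by simp [i.isLt]) h
    have h2 : PDisj (Ψ j) (Ψ i) := by simpa [List.getElem_ofFn] using this
    exact h2.symm

lemma route_of_order {L : LC C} {Θ : Fin (BD L f).card → C × C}
    (hΘ : IsShallowOrder L f Θ) (b : Fin (BD L f).card) :
    Route f L (BD L f) (Θ b) ((List.ofFn Θ).take b) := by
  have hss := sseq_of_order hΘ.2.2
  have hnd : (List.ofFn Θ).Nodup := List.nodup_ofFn.2 hΘ.1
  refine ⟨SSeq_take hss b, (List.take_sublist _ _).nodup hnd, ?_, ?_⟩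
  · intro q hq
    obtain ⟨j, hj, rfl⟩ := mem_take_ofFn.1 hq
    refine ⟨hΘ.2.1 j, ?_⟩
    intro he
    have hjb : j = b := hΘ.1 he
    rw [hjb] at hj
    exact lt_irrefl _ hj
  · exact order_shallow_of_sseq hss b

end Aux17e
/-- A bijection `Φ` onto `BD(f)` is a shallow order of `f`
if and only if it is a linear extension of the depth poset `Depth(f)`;
in particular, every linear extension of `Depth(f)` is a shallow order. -/
theorem shallow_order_iff_linear_extension (L : LC C) (f : C → ℝ)
    (hf : IsFilter L f) (Φ : Fin (BD L f).card → C × C) :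
    IsShallowOrder L f Φ ↔
      (Function.Injective Φ ∧ (∀ i, Φ i ∈ BD L f) ∧
        ∀ i j : Fin (BD L f).card, DepthRel L f (Φ i) (Φ j) → i < j) := by
  constructor
  · rintro ⟨hinj, hmem, hsh⟩
    exact ⟨hinj, hmem, fun i j hd => hd.2.2 Φ ⟨hinj, hmem, hsh⟩ i j rfl rfl⟩
  · rintro ⟨hinj, hmem, hext⟩
    refine ⟨hinj, hmem, ?_⟩
    suffices hS : SSeq f L (List.ofFn Φ) by
      exact order_shallow_of_sseq hS
    have main : ∀ k, k ≤ (BD L f).card → SSeq f L ((List.ofFn Φ).take k) := by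
      intro k
      induction k with
      | zero => intro _; simp
      | succ k ihk =>
        intro hk1
        have hk : k < (BD L f).card := hk1
        have ihk' := ihk (le_of_lt hk)
        set p := Φ ⟨k, hk⟩ with hp
        -- there exists a shallow order
        have hnd : ¬ DepthRel L f p p := by
          intro hd
          exact absurd (hext ⟨k, hk⟩ ⟨k, hk⟩ hd) (lt_irrefl _)
        have hthird : ¬ ∀ Ψ : Fin (BD L f).card → C × C, IsShallowOrder L f Ψ →
            ∀ i j : Fin (BD L f).card, Ψ i = p → Ψ j = p → i < j :=
          fun h => hnd ⟨hmem _, hmem _, h⟩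
        push_neg at hthird
        obtain ⟨Ψ, hΨ, -⟩ := hthird
        have hBDpw := BD_pairwise hΨ
        obtain ⟨bΨ, hbΨ⟩ := surj_BD hΨ.1 hΨ.2.1 p (hmem ⟨k, hk⟩)
        have hroute₀ : Route f L (BD L f) p ((List.ofFn Ψ).take bΨ) := by
          have := route_of_order hΨ bΨ
          rwa [hbΨ] at this
        obtain ⟨M, hM, hmin⟩ := minRoute ((List.ofFn Ψ).take bΨ).length L (BD L f)
          hf hBDpw p (hmem ⟨k, hk⟩) _ hroute₀ le_rfl
        set li := (List.ofFn Φ).take k with hli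
        have hstep : IsShallow (cancelList L li) f p.1 p.2 := by
          by_cases hMsub : ∀ q ∈ M, q ∈ li
          · obtain ⟨l', hssml', hquot, hl'sub⟩ := reorder hf ihk' hM.1 hMsub hM.2.1
            rw [← hquot, cancelList_append]
            apply shallow_along (SSeq_filter hf hM.1) (SSeq_append.1 hssml').2 hM.2.2.2
            intro q hq
            have hqli : q ∈ li := hl'sub q hq
            obtain ⟨j, hj, rfl⟩ := mem_take_ofFn.1 hqli
            have hne : Φ j ≠ p := by
              intro he
              have hjh : j = ⟨k, hk⟩ := hinj he
              rw [hjh] at hj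
              exact lt_irrefl _ hj
            exact hBDpw (Φ j) (hmem j) p (hmem ⟨k, hk⟩) hne
          · exfalso
            push_neg at hMsub
            obtain ⟨r, hrM, hrli⟩ := hMsub
            obtain ⟨j, hjr⟩ := surj_BD hinj hmem r (hM.2.2.1 r hrM).1
            have hjge : ¬ ((j : ℕ) < k) := fun h => hrli (mem_take_ofFn.2 ⟨j, h, hjr⟩)
            have hdr : DepthRel L f r p := by
              refine ⟨(hM.2.2.1 r hrM).1, hmem _, ?_⟩
              intro Θ hΘ a b ha hb
              have hroute : Route f L (BD L f) p ((List.ofFn Θ).take b) := by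
                have := route_of_order hΘ b
                rwa [hb] at this
              have hrin : r ∈ (List.ofFn Θ).take b := hmin _ hroute r hrM
              obtain ⟨a', ha', hΘa'⟩ := mem_take_ofFn.1 hrin
              have haa : a = a' := hΘ.1 (ha.trans hΘa'.symm)
              rw [haa]
              exact Fin.lt_def.2 ha'
            have hlt := hext j ⟨k, hk⟩ (by rw [hjr]; exact hdr)
            exact hjge (Fin.lt_def.1 hlt)
        have hlen : k < (List.ofFn Φ).length := by simpa using hk
        have htake : (List.ofFn Φ).take (k + 1) = li ++ [Φ ⟨k, hk⟩] := by
          rw [hli, List.take_succ, List.getElem?_eq_getElem hlen]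
          simp [List.getElem_ofFn]
        rw [htake, SSeq_append]
        exact ⟨ihk', hstep, trivial⟩
    have hfin := main (BD L f).card le_rfl
    rwa [List.take_of_length_le (by simp)] at hfin
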